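/- Let Y be a random variable uniformly distributed on [0,1], so that E[(Y)_{n,λ}] = ∫_0^1 (y)_{n,λ} dy for every n ≥ 0. Then for every integer n ≥ 0 and every real x: S^Y_{n,λ}(x) = Σ_{k=0}^{n} C(n,k)·β_{k,λ}(x)·(−λ)^{n−k}·(n−k)!/(n−k+1). -/

import Mathlib

open Finset PowerSeries

noncomputable def dff (lam x : ℝ) (n : ℕ) : ℝ := ∏ i ∈ Finset.range n, (x - i * lam)

noncomputable def degExp (lam x : ℝ) : PowerSeries ℝ :=
  PowerSeries.mk fun k => dff lam x k / k.factorial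

lemma dff_succ (lam x : ℝ) (n : ℕ) : dff lam x (n+1) = dff lam x n * (x - n * lam) :=
  Finset.prod_range_succ _ _

lemma dff_zero' (lam : ℝ) (n : ℕ) : dff lam 0 (n+1) = 0 := by
  apply Finset.prod_eq_zero (Finset.mem_range.mpr (Nat.succ_pos n))
  simp

lemma continuous_dff (lam : ℝ) (n : ℕ) : Continuous (fun y => dff lam y n) := by
  unfold dff
  exact continuous_finset_prod _ (fun i _ => by continuity)

lemma hderiv (lam : ℝ) (n : ℕ) (y : ℝ) :
    HasDerivAt (fun y => dff lam y n / n.factorial)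
      (∑ k ∈ Finset.range n, (-lam)^(n-1-k) / (n-k : ℕ) * (dff lam y k / k.factorial)) y := by
  induction n generalizing y with
  | zero => simpa [dff] using (hasDerivAt_const y (1:ℝ))
  | succ n ih =>
    have h1 : HasDerivAt (fun y => (dff lam y n / n.factorial) * (y - n * lam) / (n+1 : ℝ))
        (((∑ k ∈ Finset.range n, (-lam)^(n-1-k) / (n-k : ℕ) * (dff lam y k / k.factorial)) * (y - n*lam)
          + (dff lam y n / n.factorial) * 1) / (n+1 : ℝ)) y := by
      exact ((ih y).mul ((hasDerivAt_id y).sub_const _)).div_const _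
    have hfun : (fun y => (dff lam y n / n.factorial) * (y - n * lam) / (n+1 : ℝ))
        = (fun y => dff lam y (n+1) / (n+1).factorial) := by
      funext z
      rw [dff_succ, Nat.factorial_succ]
      push_cast
      rw [div_mul_eq_mul_div, div_div, mul_comm (n.factorial:ℝ)]
    rw [hfun] at h1
    convert h1 using 1
    have hne : ((n:ℝ)+1) ≠ 0 := by positivity
    rw [eq_div_iff hne, Finset.sum_mul]
    have key : ∀ k ∈ Finset.range (n+1),
        ((-lam)^(n+1-1-k) / ((n+1-k : ℕ):ℝ) * (dff lam y k / k.factorial)) * ((n:ℝ)+1)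
        = (k:ℝ) * ((-lam)^(n-k) / ((n+1-k : ℕ):ℝ)) * (dff lam y k / k.factorial)
          + (-lam)^(n-k) * (dff lam y k / k.factorial) := by
      intro k hk
      have hk' : k ≤ n := by simpa [Nat.lt_succ_iff] using hk
      have h2 : ((n+1-k:ℕ):ℝ) = (n:ℝ)+1-k := by
        push_cast [Nat.cast_sub (by omega : k ≤ n+1)]; ring
      have h3 : ((n:ℝ)+1-k) ≠ 0 := by
        have : (k:ℝ) ≤ n := by exact_mod_cast hk'
        linarith
      have hf : ((k.factorial : ℝ)) ≠ 0 := Nat.cast_ne_zero.mpr (Nat.factorial_ne_zero k)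
      rw [show n+1-1-k = n-k from by omega, h2]
      field_simp
      ring
    rw [Finset.sum_congr rfl key, Finset.sum_add_distrib, Finset.sum_range_succ'
      (fun k => (k:ℝ) * ((-lam)^(n-k) / ((n+1-k : ℕ):ℝ)) * (dff lam y k / k.factorial)) n,
      Finset.sum_range_succ (fun k => (-lam)^(n-k) * (dff lam y k / k.factorial)) n]
    have key2 : ∀ k ∈ Finset.range n,
        ((-lam)^(n-1-k) / ((n-k : ℕ):ℝ) * (dff lam y k / k.factorial)) * (y - n*lam)
        = ((k:ℝ)+1) * ((-lam)^(n-1-k) / ((n-k : ℕ):ℝ)) * (dff lam y (k+1) / (k+1).factorial)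
          + (-lam)^(n-k) * (dff lam y k / k.factorial) := by
      intro k hk
      have hk' : k < n := Finset.mem_range.mp hk
      have h2 : ((n-k:ℕ):ℝ) = (n:ℝ)-k := by
        push_cast [Nat.cast_sub hk'.le]; ring
      have h3 : ((n:ℝ)-k) ≠ 0 := by
        have : (k:ℝ) < n := by exact_mod_cast hk'
        linarith
      have hf : ((k.factorial : ℝ)) ≠ 0 := Nat.cast_ne_zero.mpr (Nat.factorial_ne_zero k)
      rw [dff_succ, Nat.factorial_succ,
        show (-lam)^(n-k) = (-lam)^(n-1-k) * (-lam) from by rw [← pow_succ]; congr 1; omega, h2]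
      push_cast
      field_simp
      ring
    rw [Finset.sum_mul, Finset.sum_congr rfl key2, Finset.sum_add_distrib]
    have key3 : ∀ k ∈ Finset.range n,
        ((k+1:ℕ):ℝ) * ((-lam)^(n-(k+1)) / ((n+1-(k+1) : ℕ):ℝ)) * (dff lam y (k+1) / (k+1).factorial)
        = ((k:ℝ)+1) * ((-lam)^(n-1-k) / ((n-k : ℕ):ℝ)) * (dff lam y (k+1) / (k+1).factorial) := by
      intro k hk
      rw [show n-(k+1) = n-1-k from by omega, show n+1-(k+1) = n-k from by omega]
      push_cast
      ring
    rw [Finset.sum_congr rfl key3]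
    simp only [Nat.sub_self, pow_zero, Nat.cast_zero, zero_mul, add_zero, one_mul, mul_one]
    ring

lemma frac_aux (b p c f e d : ℝ) (hf : f ≠ 0) (hd : d ≠ 0) :
    b / f * (p / d) * (c * f * e) = c * b * (p * e / d) := by
  field_simp

lemma integral_key (lam : ℝ) (n : ℕ) (hn : n ≠ 0) :
    ∑ k ∈ Finset.range n, (-lam)^(n-1-k) / ((n-k : ℕ):ℝ) *
        ((∫ y in (0:ℝ)..1, dff lam y k) / k.factorial)
      = dff lam 1 n / n.factorial := by
  have hc : ∀ k : ℕ, Continuous (fun y => (-lam)^(n-1-k) / ((n-k : ℕ):ℝ) * (dff lam y k / k.factorial)) :=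
    fun k => continuous_const.mul ((continuous_dff lam k).div_const _)
  have h1 : (∫ y in (0:ℝ)..1, ∑ k ∈ Finset.range n,
        (-lam)^(n-1-k) / ((n-k:ℕ):ℝ) * (dff lam y k / k.factorial))
      = dff lam 1 n / n.factorial - dff lam 0 n / n.factorial := by
    apply intervalIntegral.integral_eq_sub_of_hasDerivAt (fun y _ => hderiv lam n y)
    apply Continuous.intervalIntegrable
    exact continuous_finset_sum _ (fun k _ => hc k)
  rw [intervalIntegral.integral_finset_sum (fun k _ => (hc k).intervalIntegrable 0 1)] at h1
  obtain ⟨m, rfl⟩ := Nat.exists_eq_succ_of_ne_zero hn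
  rw [dff_zero'] at h1
  simp only [zero_div, sub_zero] at h1
  rw [← h1]
  apply Finset.sum_congr rfl
  intro k _
  rw [intervalIntegral.integral_const_mul, intervalIntegral.integral_div]

theorem stmt11 (lam : ℝ) (hlam : lam ≠ 0)
    (B : ℝ → ℕ → ℝ)
    (hB : ∀ x, (PowerSeries.mk fun n => B x n / n.factorial) * (degExp lam 1 - 1)
        = (PowerSeries.X : PowerSeries ℝ) * degExp lam x)
    (S : ℝ → ℕ → ℝ)
    (hS : ∀ x, (PowerSeries.mk fun n => S x n / n.factorial) *
        (PowerSeries.mk fun n => (∫ y in (0:ℝ)..1, dff lam y n) / n.factorial)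
          = degExp lam x)
    (n : ℕ) (x : ℝ) :
    S x n = ∑ k ∈ Finset.range (n + 1),
      (n.choose k : ℝ) * B x k * ((-lam) ^ (n - k) * (n - k).factorial / (n - k + 1)) := by
  classical
  set M : PowerSeries ℝ := PowerSeries.mk fun n => (∫ y in (0:ℝ)..1, dff lam y n) / n.factorial with hM
  set L : PowerSeries ℝ := PowerSeries.mk fun m => (-lam)^m / ((m:ℝ)+1) with hL
  have hXL : PowerSeries.X * (M * L) = degExp lam 1 - 1 := by
    ext m
    cases m with
    | zero => simp [degExp, dff]
    | succ m =>
      rw [PowerSeries.coeff_succ_X_mul, map_sub, PowerSeries.coeff_one,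
        if_neg (Nat.succ_ne_zero m), degExp, PowerSeries.coeff_mk, sub_zero,
        PowerSeries.coeff_mul, Finset.Nat.sum_antidiagonal_eq_sum_range_succ_mk,
        ← integral_key lam (m+1) (Nat.succ_ne_zero m)]
      apply Finset.sum_congr rfl
      intro k hk
      have hk' : k ≤ m := Nat.lt_succ_iff.mp (Finset.mem_range.mp hk)
      simp only [hM, hL, PowerSeries.coeff_mk]
      rw [show m+1-1-k = m-k from by omega, show m+1-k = (m-k)+1 from by omega]
      push_cast
      ring
  have hMne : M ≠ 0 := by
    intro h
    have := congrArg (PowerSeries.coeff (R := ℝ) 0) h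
    simp [hM, dff] at this
  have h2 : (PowerSeries.mk fun n => S x n / n.factorial) * M
      = ((PowerSeries.mk fun n => B x n / n.factorial) * L) * M := by
    apply mul_left_cancel₀ (PowerSeries.X_ne_zero : (PowerSeries.X : PowerSeries ℝ) ≠ 0)
    calc PowerSeries.X * ((PowerSeries.mk fun n => S x n / n.factorial) * M)
        = PowerSeries.X * degExp lam x := by rw [hS x]
      _ = (PowerSeries.mk fun n => B x n / n.factorial) * (degExp lam 1 - 1) := (hB x).symm
      _ = (PowerSeries.mk fun n => B x n / n.factorial) * (PowerSeries.X * (M * L)) := by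
          rw [hXL]
      _ = PowerSeries.X * (((PowerSeries.mk fun n => B x n / n.factorial) * L) * M) := by ring
  have key := mul_right_cancel₀ hMne h2
  have hco := congrArg (PowerSeries.coeff (R := ℝ) n) key
  rw [PowerSeries.coeff_mk, PowerSeries.coeff_mul,
    Finset.Nat.sum_antidiagonal_eq_sum_range_succ_mk] at hco
  have hfn : (n.factorial : ℝ) ≠ 0 := Nat.cast_ne_zero.mpr (Nat.factorial_ne_zero n)
  rw [div_eq_iff hfn] at hco
  rw [hco, Finset.sum_mul]
  apply Finset.sum_congr rfl
  intro k hk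
  have hk' : k ≤ n := Nat.lt_succ_iff.mp (Finset.mem_range.mp hk)
  simp only [hL, PowerSeries.coeff_mk]
  have hfac : ((n.choose k : ℕ) : ℝ) * k.factorial * (n-k).factorial = n.factorial := by
    exact_mod_cast congrArg (Nat.cast : ℕ → ℝ) (Nat.choose_mul_factorial_mul_factorial hk')
  have hfk : (k.factorial : ℝ) ≠ 0 := Nat.cast_ne_zero.mpr (Nat.factorial_ne_zero k)
  have hd : ((n-k : ℕ):ℝ) + 1 ≠ 0 := by positivity
  have hcast : ((n:ℝ) - k + 1) = ((n-k : ℕ):ℝ) + 1 := by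
    rw [Nat.cast_sub hk']
  rw [hcast, ← hfac]
  exact frac_aux _ _ _ _ _ _ hfk hd
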